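/- Two distinct vertices x and x' of a generic p×q transportation polytope P are adjacent (connected by an edge of P) if and only if the union of their support graphs B(x) ∪ B(x') in K_{p,q} contains a unique cycle. -/

import Mathlib

open Finset
open SimpleGraph Sum

/-- The `p × q` classical transportation polytope defined by marginals `u` and `v`. -/
def transportationPolytope (p q : ℕ) (u : Fin p → ℝ) (v : Fin q → ℝ) :
    Set (Matrix (Fin p) (Fin q) ℝ) :=
  {x | (∀ i j, 0 ≤ x i j) ∧ (∀ i, ∑ j, x i j = u i) ∧ (∀ j, ∑ i, x i j = v j)}

/-- The support graph `B(x)` of a table `x`: the bipartite graph on supply nodes `Fin p`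
and demand nodes `Fin q` with an edge `(i, j)` iff `x i j > 0`. -/
def supportGraph {p q : ℕ} (x : Matrix (Fin p) (Fin q) ℝ) :
    SimpleGraph (Fin p ⊕ Fin q) where
  Adj a b :=
    match a, b with
    | .inl i, .inr j => 0 < x i j
    | .inr j, .inl i => 0 < x i j
    | _, _ => False
  symm := ⟨by rintro (i | j) (i' | j') h <;> exact h⟩
  loopless := ⟨by rintro (i | j) h <;> exact h⟩

/-- A graph contains a unique cycle: it has a cycle, and any two cycles traverse the
same set of edges. -/
def HasUniqueCycle {V : Type*} [DecidableEq V] (G : SimpleGraph V) : Prop :=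
  ¬ G.IsAcyclic ∧
    ∀ ⦃a b : V⦄ (c : G.Walk a a) (d : G.Walk b b), c.IsCycle → d.IsCycle →
      c.edges.toFinset = d.edges.toFinset


variable {p q : ℕ}

/-- Cross graph of the nonzero entries of a matrix. -/
def diffGraph (d : Matrix (Fin p) (Fin q) ℝ) : SimpleGraph (Fin p ⊕ Fin q) where
  Adj a b :=
    match a, b with
    | .inl i, .inr j => d i j ≠ 0
    | .inr j, .inl i => d i j ≠ 0
    | _, _ => False
  symm := ⟨by rintro (i | j) (i' | j') h <;> exact h⟩
  loopless := ⟨by rintro (i | j) h <;> exact h⟩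

lemma diffGraph_adj (d : Matrix (Fin p) (Fin q) ℝ) (i j) :
    (diffGraph d).Adj (.inl i) (.inr j) ↔ d i j ≠ 0 := Iff.rfl

/-- homogeneous flow supported on an acyclic bipartite graph is zero -/
lemma eq_zero_of_diffGraph_isAcyclic (d : Matrix (Fin p) (Fin q) ℝ)
    (hr : ∀ i, ∑ j, d i j = 0) (hc : ∀ j, ∑ i, d i j = 0)
    (hac : (diffGraph d).IsAcyclic) : d = 0 := by
  classical
  by_contra hd
  obtain ⟨i0, hi0⟩ := Function.ne_iff.mp hd
  obtain ⟨j0, hj0⟩ := Function.ne_iff.mp hi0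
  have hj0 : d i0 j0 ≠ 0 := hj0
  have hadj : (diffGraph d).Adj (.inl i0) (.inr j0) := hj0
  have hbr := (isAcyclic_iff_forall_adj_isBridge.mp hac) hadj
  rw [isBridge_iff] at hbr
  set G' := diffGraph d \ fromEdgeSet {s(Sum.inl i0, Sum.inr j0)} with hG'
  set K : (Fin p ⊕ Fin q) → Prop := fun a => G'.Reachable (.inr j0) a with hK
  have hKj0 : K (.inr j0) := Reachable.refl _
  have hKi0 : ¬ K (.inl i0) := fun h => hbr (h.symm)
  -- crossing rule
  have hcross : ∀ a b, K a → (diffGraph d).Adj a b →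
      s(a, b) ≠ s(Sum.inl i0, Sum.inr j0) → K b := by
    intro a b hKa hab hne
    have : G'.Adj a b := by
      rw [hG', sdiff_adj, fromEdgeSet_adj]
      exact ⟨hab, fun h => hne h.1⟩
    exact hKa.trans this.reachable
  set Y : Finset (Fin p) := univ.filter (fun i => K (.inl i)) with hY
  set Z : Finset (Fin q) := univ.filter (fun j => K (.inr j)) with hZ
  have hj0Z : j0 ∈ Z := by simp [hZ, hKj0]
  have hi0Y : i0 ∉ Y := by simp [hY, hKi0]
  -- terms with i ∈ Y, j ∉ Z vanish
  have hYZc : ∀ i ∈ Y, ∀ j, j ∉ Z → d i j = 0 := by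
    intro i hi j hj
    by_contra hdij
    have hKi : K (.inl i) := by simpa [hY] using hi
    have hne : s(Sum.inl i, Sum.inr j) ≠ s(Sum.inl i0, Sum.inr j0) := by
      intro h
      rw [Sym2.eq_iff] at h
      rcases h with ⟨h1, h2⟩ | ⟨h1, h2⟩
      · exact hKi0 (h1 ▸ hKi)
      · exact Sum.inl_ne_inr h1
    have := hcross _ _ hKi (show (diffGraph d).Adj (.inl i) (.inr j) from hdij) hne
    exact hj (by simp [hZ, this])
  -- terms with j ∈ Z, i ∉ Y vanish except (i0, j0)
  have hZYc : ∀ j ∈ Z, ∀ i, i ∉ Y → (i, j) ≠ (i0, j0) → d i j = 0 := by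
    intro j hj i hi hpair
    by_contra hdij
    have hKj : K (.inr j) := by simpa [hZ] using hj
    have hne : s(Sum.inr j, Sum.inl i) ≠ s(Sum.inl i0, Sum.inr j0) := by
      intro h
      rw [Sym2.eq_iff] at h
      rcases h with ⟨h1, h2⟩ | ⟨h1, h2⟩
      · exact Sum.inr_ne_inl h1
      · exact hpair (by rw [Prod.mk.injEq]
                        exact ⟨by injection h2, by injection h1⟩)
    have := hcross _ _ hKj (show (diffGraph d).Adj (.inr j) (.inl i) from hdij) hne
    exact hi (by simp [hY, this])
  -- row sums over Y
  have hA : ∑ i ∈ Y, ∑ j ∈ Z, d i j = 0 := by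
    have h1 : ∑ i ∈ Y, ∑ j, d i j = 0 := Finset.sum_eq_zero fun i _ => hr i
    have h2 : ∀ i ∈ Y, ∑ j, d i j = ∑ j ∈ Z, d i j := by
      intro i hi
      rw [← Finset.sum_filter_add_sum_filter_not univ (fun j => K (.inr j)) (d i)]
      have : ∑ j ∈ univ.filter (fun j => ¬ K (.inr j)), d i j = 0 := by
        apply Finset.sum_eq_zero
        intro j hjmem
        refine hYZc i hi j ?_
        simp only [hZ, mem_filter, mem_univ, true_and] at hjmem ⊢
        simpa using hjmem
      rw [this, add_zero]
    rw [← Finset.sum_congr rfl h2]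
    exact h1
  -- column sums over Z
  have hB : ∑ j ∈ Z, ∑ i ∈ Y, d i j + d i0 j0 = 0 := by
    have h1 : ∑ j ∈ Z, ∑ i, d i j = 0 := Finset.sum_eq_zero fun j _ => hc j
    have h2 : ∀ j ∈ Z, ∑ i, d i j
        = ∑ i ∈ Y, d i j + (if j = j0 then d i0 j0 else 0) := by
      intro j hj
      rw [← Finset.sum_filter_add_sum_filter_not univ (fun i => K (.inl i)) (fun i => d i j)]
      congr 1
      have hYc : (univ.filter (fun i => ¬ K (.inl i))) = univ.filter (fun i => i ∉ Y) := by
        ext i; simp [hY]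
      rw [hYc]
      by_cases hjj : j = j0
      · rw [if_pos hjj, ← hjj]
        refine Finset.sum_eq_single_of_mem i0 (by simp [hi0Y]) ?_
        intro i himem hine
        exact hZYc j hj i (by simpa using himem) (by simp [hine, hjj])
      · rw [if_neg hjj]
        apply Finset.sum_eq_zero
        intro i himem
        exact hZYc j hj i (by simpa using himem) (by simp [hjj])
    rw [Finset.sum_congr rfl h2, Finset.sum_add_distrib, Finset.sum_ite_eq' Z j0] at h1
    rw [if_pos hj0Z] at h1
    exact h1
  rw [Finset.sum_comm] at hB
  rw [hA, zero_add] at hB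
  exact hj0 hB


/-- A graph on `Fin p ⊕ Fin q` only has cross edges. -/
def Crossing (G : SimpleGraph (Fin p ⊕ Fin q)) : Prop :=
  (∀ i i', ¬ G.Adj (.inl i) (.inl i')) ∧ (∀ j j', ¬ G.Adj (.inr j) (.inr j'))

/-- Elementary step matrix of a directed edge. -/
def stepMat : (Fin p ⊕ Fin q) → (Fin p ⊕ Fin q) → Matrix (Fin p) (Fin q) ℝ
  | .inl i, .inr j => fun i' j' => if i' = i ∧ j' = j then 1 else 0
  | .inr j, .inl i => fun i' j' => if i' = i ∧ j' = j then -1 else 0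
  | .inl _, .inl _ => 0
  | .inr _, .inr _ => 0

/-- The flow matrix of a walk. -/
def walkFlow {G : SimpleGraph (Fin p ⊕ Fin q)} : {a b : Fin p ⊕ Fin q} → G.Walk a b →
    Matrix (Fin p) (Fin q) ℝ
  | _, _, .nil => 0
  | a, _, .cons (v := c) _ w => stepMat a c + walkFlow w

@[simp] lemma walkFlow_nil {G : SimpleGraph (Fin p ⊕ Fin q)} {a : Fin p ⊕ Fin q} :
    walkFlow (.nil : G.Walk a a) = 0 := rfl

@[simp] lemma walkFlow_cons {G : SimpleGraph (Fin p ⊕ Fin q)} {a c b : Fin p ⊕ Fin q}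
    (h : G.Adj a c) (w : G.Walk c b) :
    walkFlow (.cons h w) = stepMat a c + walkFlow w := rfl

lemma crossing_cases {G : SimpleGraph (Fin p ⊕ Fin q)} (hG : Crossing G)
    {a b : Fin p ⊕ Fin q} (h : G.Adj a b) :
    (∃ i j, a = .inl i ∧ b = .inr j) ∨ ∃ i j, a = .inr j ∧ b = .inl i := by
  rcases a with i | j <;> rcases b with i' | j'
  · exact absurd h (hG.1 i i')
  · exact Or.inl ⟨i, j', rfl, rfl⟩
  · exact Or.inr ⟨i', j, rfl, rfl⟩
  · exact absurd h (hG.2 j j')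

lemma stepMat_rowSum (a b : Fin p ⊕ Fin q) (hab : ¬ (∃ i i', a = .inl i ∧ b = .inl i'))
    (i : Fin p) :
    ∑ j, stepMat a b i j
      = (if a = .inl i then 1 else 0) - (if b = .inl i then 1 else 0) := by
  rcases a with i' | j' <;> rcases b with i'' | j''
  · exact absurd ⟨i', i'', rfl, rfl⟩ hab
  · simp only [stepMat]
    by_cases h : i = i' <;> simp [h, eq_comm]
  · simp only [stepMat]
    by_cases h : i = i'' <;> simp [h, eq_comm]
  · simp [stepMat]

lemma stepMat_colSum (a b : Fin p ⊕ Fin q) (hab : ¬ (∃ j j', a = .inr j ∧ b = .inr j'))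
    (j : Fin q) :
    ∑ i, stepMat a b i j
      = (if b = .inr j then 1 else 0) - (if a = .inr j then 1 else 0) := by
  rcases a with i' | j' <;> rcases b with i'' | j''
  · simp [stepMat]
  · simp only [stepMat]
    by_cases h : j = j'' <;> simp [h, eq_comm]
  · simp only [stepMat]
    by_cases h : j = j' <;> simp [h, eq_comm]
  · exact absurd ⟨j', j'', rfl, rfl⟩ hab

lemma walkFlow_rowSum {G : SimpleGraph (Fin p ⊕ Fin q)} (hG : Crossing G)
    {a b : Fin p ⊕ Fin q} (w : G.Walk a b) (i : Fin p) :
    ∑ j, walkFlow w i j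
      = (if a = .inl i then 1 else 0) - (if b = .inl i then 1 else 0) := by
  induction w with
  | nil => simp
  | @cons a c b h w ih =>
    rw [walkFlow_cons]
    simp only [Matrix.add_apply, Finset.sum_add_distrib, ih]
    rw [stepMat_rowSum a c (by rintro ⟨i1, i2, rfl, rfl⟩; exact hG.1 i1 i2 h)]
    ring

lemma walkFlow_colSum {G : SimpleGraph (Fin p ⊕ Fin q)} (hG : Crossing G)
    {a b : Fin p ⊕ Fin q} (w : G.Walk a b) (j : Fin q) :
    ∑ i, walkFlow w i j
      = (if b = .inr j then 1 else 0) - (if a = .inr j then 1 else 0) := by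
  induction w with
  | nil => simp
  | @cons a c b h w ih =>
    rw [walkFlow_cons]
    simp only [Matrix.add_apply, Finset.sum_add_distrib, ih]
    rw [stepMat_colSum a c (by rintro ⟨j1, j2, rfl, rfl⟩; exact hG.2 j1 j2 h)]
    ring

lemma stepMat_eq_zero_of_ne (a b : Fin p ⊕ Fin q) (i : Fin p) (j : Fin q)
    (h : s(Sum.inl i, Sum.inr j) ≠ s(a, b)) : stepMat a b i j = 0 := by
  rcases a with i' | j' <;> rcases b with i'' | j''
  · simp [stepMat]
  · simp only [stepMat]
    rw [if_neg]
    rintro ⟨rfl, rfl⟩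
    exact h rfl
  · simp only [stepMat]
    rw [if_neg]
    rintro ⟨rfl, rfl⟩
    exact h (Sym2.eq_swap)
  · simp [stepMat]

lemma walkFlow_entry {G : SimpleGraph (Fin p ⊕ Fin q)}
    {a b : Fin p ⊕ Fin q} (w : G.Walk a b) (hnd : w.edges.Nodup) (i : Fin p) (j : Fin q) :
    (s(Sum.inl i, Sum.inr j) ∈ w.edges ∧
        (walkFlow w i j = 1 ∨ walkFlow w i j = -1)) ∨
      (s(Sum.inl i, Sum.inr j) ∉ w.edges ∧ walkFlow w i j = 0) := by
  induction w with
  | nil => simp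
  | @cons a c b h w ih =>
    rw [Walk.edges_cons, List.nodup_cons] at hnd
    obtain ⟨hhead, hnd⟩ := hnd
    rcases ih hnd with ⟨hmem, hval⟩ | ⟨hmem, hval⟩
    · refine Or.inl ⟨by rw [Walk.edges_cons]; exact List.mem_cons_of_mem _ hmem, ?_⟩
      have hne : s(Sum.inl i, Sum.inr j) ≠ s(a, c) := fun hh => hhead (hh ▸ hmem)
      rw [walkFlow_cons, Matrix.add_apply, stepMat_eq_zero_of_ne a c i j hne, zero_add]
      exact hval
    · by_cases he : s(Sum.inl i, Sum.inr j) = s(a, c)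
      · refine Or.inl ⟨by rw [Walk.edges_cons, he]; exact List.mem_cons_self, ?_⟩
        rw [walkFlow_cons, Matrix.add_apply, hval, add_zero]
        rw [Sym2.eq_iff] at he
        rcases he with ⟨h1, h2⟩ | ⟨h1, h2⟩
        · rw [← h1, ← h2]
          simp [stepMat]
        · rw [← h1, ← h2]
          simp [stepMat]
      · refine Or.inr ⟨?_, ?_⟩
        · rw [Walk.edges_cons]
          simp only [List.mem_cons]
          rintro (hh | hh)
          · exact he hh
          · exact hmem hh
        · rw [walkFlow_cons, Matrix.add_apply, stepMat_eq_zero_of_ne a c i j he, hval,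
            add_zero]

lemma walkFlow_ne_zero_iff {G : SimpleGraph (Fin p ⊕ Fin q)}
    {a b : Fin p ⊕ Fin q} (w : G.Walk a b) (hnd : w.edges.Nodup) (i : Fin p) (j : Fin q) :
    walkFlow w i j ≠ 0 ↔ s(Sum.inl i, Sum.inr j) ∈ w.edges := by
  rcases walkFlow_entry w hnd i j with ⟨hmem, hval⟩ | ⟨hmem, hval⟩
  · constructor
    · intro _; exact hmem
    · intro _; rcases hval with h | h <;> rw [h] <;> norm_num
  · constructor
    · intro h; exact absurd hval h
    · intro h; exact absurd h hmem

lemma exists_cross_rep {G : SimpleGraph (Fin p ⊕ Fin q)} (hG : Crossing G)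
    {e : Sym2 (Fin p ⊕ Fin q)} (he : e ∈ G.edgeSet) :
    ∃ i j, e = s(Sum.inl i, Sum.inr j) := by
  induction e with
  | _ a b =>
    rw [SimpleGraph.mem_edgeSet] at he
    rcases crossing_cases hG he with ⟨i, j, rfl, rfl⟩ | ⟨i, j, rfl, rfl⟩
    · exact ⟨i, j, rfl⟩
    · exact ⟨i, j, Sym2.eq_swap⟩

lemma walkFlow_ne_zero_of_isCycle {G : SimpleGraph (Fin p ⊕ Fin q)} (hG : Crossing G)
    {a : Fin p ⊕ Fin q} {c : G.Walk a a} (hc : c.IsCycle) : walkFlow c ≠ 0 := by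
  have hnil : c.edges ≠ [] := by
    intro h
    apply hc.ne_nil
    rw [Walk.eq_nil_iff_nil, ← Walk.length_eq_zero_iff, ← c.length_edges, h]
    rfl
  obtain ⟨e, he⟩ := List.exists_mem_of_ne_nil _ hnil
  obtain ⟨i, j, rfl⟩ := exists_cross_rep hG (c.edges_subset_edgeSet he)
  intro h0
  have := (walkFlow_ne_zero_iff c hc.isTrail.edges_nodup i j).mpr he
  rw [h0] at this
  exact this rfl

lemma edges_toFinset_eq {G : SimpleGraph (Fin p ⊕ Fin q)} (hG : Crossing G)
    {a b : Fin p ⊕ Fin q} (w : G.Walk a b) (hnd : w.edges.Nodup) :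
    w.edges.toFinset
      = ((Finset.univ : Finset (Fin p × Fin q)).filter
            (fun pr => walkFlow w pr.1 pr.2 ≠ 0)).image
          (fun pr => s(Sum.inl pr.1, Sum.inr pr.2)) := by
  classical
  ext e
  simp only [List.mem_toFinset, Finset.mem_image, Finset.mem_filter, Finset.mem_univ, true_and]
  constructor
  · intro he
    obtain ⟨i, j, rfl⟩ := exists_cross_rep hG (w.edges_subset_edgeSet he)
    exact ⟨(i, j), (walkFlow_ne_zero_iff w hnd i j).mpr he, rfl⟩
  · rintro ⟨⟨i, j⟩, hne, rfl⟩
    exact (walkFlow_ne_zero_iff w hnd i j).mp hne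

lemma isAcyclic_mono {V : Type*} {G H : SimpleGraph V} (hle : H ≤ G)
    (hG : G.IsAcyclic) : H.IsAcyclic := by
  intro a c hc
  exact hG (c.mapLe hle) (hc.mapLe hle)

lemma edges_mapLe {V : Type*} {G H : SimpleGraph V} (hle : H ≤ G) {a b : V}
    (w : H.Walk a b) : (w.mapLe hle).edges = w.edges := by
  rw [Walk.mapLe, Walk.edges_map]
  have : ∀ e ∈ w.edges, Sym2.map (⇑(SimpleGraph.Hom.ofLE hle)) e = e := by
    intro e _
    induction e with
    | _ a b => simp [SimpleGraph.Hom.ofLE_apply]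
  rw [List.map_congr_left this]; exact List.map_id _

lemma diffGraph_crossing (d : Matrix (Fin p) (Fin q) ℝ) : Crossing (diffGraph d) :=
  ⟨fun _ _ h => h, fun _ _ h => h⟩

lemma diffGraph_le {G : SimpleGraph (Fin p ⊕ Fin q)} (d : Matrix (Fin p) (Fin q) ℝ)
    (h : ∀ i j, d i j ≠ 0 → G.Adj (.inl i) (.inr j)) : diffGraph d ≤ G := by
  intro a b hab
  rcases a with i | j <;> rcases b with i' | j'
  · exact hab.elim
  · exact h i j' hab
  · exact (h i' j hab).symm
  · exact hab.elim

lemma exists_cycle_of_ne_zero (d : Matrix (Fin p) (Fin q) ℝ)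
    (hr : ∀ i, ∑ j, d i j = 0) (hc : ∀ j, ∑ i, d i j = 0) (hd : d ≠ 0) :
    ∃ (a : Fin p ⊕ Fin q) (c : (diffGraph d).Walk a a), c.IsCycle := by
  have hnacy : ¬ (diffGraph d).IsAcyclic := fun h =>
    hd (eq_zero_of_diffGraph_isAcyclic d hr hc h)
  simp only [SimpleGraph.IsAcyclic, not_forall, not_not] at hnacy
  exact hnacy

lemma exists_edge_of_isCycle {V : Type*} {G : SimpleGraph V} {a : V} {c : G.Walk a a}
    (hc : c.IsCycle) : ∃ e, e ∈ c.edges := by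
  apply List.exists_mem_of_ne_nil
  intro h
  apply hc.ne_nil
  rw [Walk.eq_nil_iff_nil, ← Walk.length_eq_zero_iff, ← c.length_edges, h]
  rfl

lemma supportGraph_sup_crossing (x x' : Matrix (Fin p) (Fin q) ℝ) :
    Crossing (supportGraph x ⊔ supportGraph x') := by
  constructor
  · rintro i i' (h | h) <;> exact h
  · rintro j j' (h | h) <;> exact h

lemma supportGraph_sup_adj (x x' : Matrix (Fin p) (Fin q) ℝ) (i : Fin p) (j : Fin q) :
    (supportGraph x ⊔ supportGraph x').Adj (.inl i) (.inr j) ↔ 0 < x i j ∨ 0 < x' i j :=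
  Iff.rfl

lemma mem_segment_of_supp_subset (u : Fin p → ℝ) (v : Fin q → ℝ)
    (x x' y : Matrix (Fin p) (Fin q) ℝ)
    (hx : x ∈ Set.extremePoints ℝ (transportationPolytope p q u v))
    (hx' : x' ∈ Set.extremePoints ℝ (transportationPolytope p q u v))
    (hne : x ≠ x')
    (huc : HasUniqueCycle (supportGraph x ⊔ supportGraph x'))
    (hy : y ∈ transportationPolytope p q u v)
    (hsupp : ∀ i j, y i j ≠ 0 → (supportGraph x ⊔ supportGraph x').Adj (.inl i) (.inr j)) :
    y ∈ segment ℝ x x' := by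
  classical
  set G := supportGraph x ⊔ supportGraph x' with hG
  obtain ⟨hxnn, hxr, hxc⟩ := hx.1
  obtain ⟨hx'nn, hx'r, hx'c⟩ := hx'.1
  obtain ⟨hynn, hyr, hyc⟩ := hy
  set d : Matrix (Fin p) (Fin q) ℝ := y - x with hdd
  set d' : Matrix (Fin p) (Fin q) ℝ := x' - x with hdd'
  have hdr : ∀ i, ∑ j, d i j = 0 := by
    intro i; simp only [hdd, Matrix.sub_apply, Finset.sum_sub_distrib, hyr i, hxr i, sub_self]
  have hdc : ∀ j, ∑ i, d i j = 0 := by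
    intro j; simp only [hdd, Matrix.sub_apply, Finset.sum_sub_distrib, hyc j, hxc j, sub_self]
  have hd'r : ∀ i, ∑ j, d' i j = 0 := by
    intro i; simp only [hdd', Matrix.sub_apply, Finset.sum_sub_distrib, hx'r i, hxr i, sub_self]
  have hd'c : ∀ j, ∑ i, d' i j = 0 := by
    intro j; simp only [hdd', Matrix.sub_apply, Finset.sum_sub_distrib, hx'c j, hxc j, sub_self]
  have hled : diffGraph d ≤ G := by
    apply diffGraph_le
    intro i j hij
    rw [hdd, Matrix.sub_apply, sub_ne_zero] at hij
    by_cases hy0 : y i j = 0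
    · rw [hG, supportGraph_sup_adj]
      left
      rcases lt_or_eq_of_le (hxnn i j) with h | h
      · exact h
      · exact absurd (hy0.trans h) hij
    · exact hsupp i j hy0
  have hled' : diffGraph d' ≤ G := by
    apply diffGraph_le
    intro i j hij
    rw [hdd', Matrix.sub_apply, sub_ne_zero] at hij
    rw [hG, supportGraph_sup_adj]
    rcases lt_or_eq_of_le (hxnn i j) with h | h
    · exact Or.inl h
    · rcases lt_or_eq_of_le (hx'nn i j) with h' | h'
      · exact Or.inr h'
      · exact absurd (h'.symm.trans h) hij
  by_cases hd0 : d = 0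
  · have : y = x := by rwa [hdd, sub_eq_zero] at hd0
    rw [this]; exact left_mem_segment ℝ x x'
  obtain ⟨a0, c0, hc0⟩ := exists_cycle_of_ne_zero d hdr hdc hd0
  have hd'0 : d' ≠ 0 := by rw [hdd', sub_ne_zero]; exact Ne.symm hne
  obtain ⟨a1, c1, hc1⟩ := exists_cycle_of_ne_zero d' hd'r hd'c hd'0
  have hsame := huc.2 (c0.mapLe hled) (c1.mapLe hled') (hc0.mapLe hled) (hc1.mapLe hled')
  rw [edges_mapLe hled, edges_mapLe hled'] at hsame
  obtain ⟨e, he0⟩ := exists_edge_of_isCycle hc0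
  obtain ⟨i0, j0, rfl⟩ := exists_cross_rep (diffGraph_crossing d) (c0.edges_subset_edgeSet he0)
  have hdi0 : d i0 j0 ≠ 0 := c0.adj_of_mem_edges he0
  have he1 : s(Sum.inl i0, Sum.inr j0) ∈ c1.edges := by
    rw [← List.mem_toFinset, ← hsame, List.mem_toFinset]; exact he0
  have hd'i0 : d' i0 j0 ≠ 0 := c1.adj_of_mem_edges he1
  set t : ℝ := d i0 j0 / d' i0 j0 with ht
  set d'' : Matrix (Fin p) (Fin q) ℝ := d - t • d' with hdd''
  have hd''r : ∀ i, ∑ j, d'' i j = 0 := by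
    intro i
    simp only [hdd'', Matrix.sub_apply, Matrix.smul_apply, smul_eq_mul,
      Finset.sum_sub_distrib, ← Finset.mul_sum, hdr i, hd'r i, mul_zero, sub_self]
  have hd''c : ∀ j, ∑ i, d'' i j = 0 := by
    intro j
    simp only [hdd'', Matrix.sub_apply, Matrix.smul_apply, smul_eq_mul,
      Finset.sum_sub_distrib, ← Finset.mul_sum, hdc j, hd'c j, mul_zero, sub_self]
  have hd''e : d'' i0 j0 = 0 := by
    simp only [hdd'', Matrix.sub_apply, Matrix.smul_apply, smul_eq_mul, ht]
    field_simp
    ring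
  have hled'' : diffGraph d'' ≤ G := by
    apply diffGraph_le
    intro i j hij
    by_cases hdij : d i j = 0
    · have : d' i j ≠ 0 := by
        intro h
        apply hij
        simp [hdd'', Matrix.sub_apply, hdij, h]
      exact hled' this
    · exact hled hdij
  have hac'' : (diffGraph d'').IsAcyclic := by
    intro a2 c2 hc2
    have hsame2 := huc.2 (c2.mapLe hled'') (c0.mapLe hled) (hc2.mapLe hled'') (hc0.mapLe hled)
    rw [edges_mapLe hled'', edges_mapLe hled] at hsame2
    have : s(Sum.inl i0, Sum.inr j0) ∈ c2.edges := by
      rw [← List.mem_toFinset, hsame2, List.mem_toFinset]; exact he0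
    exact (c2.adj_of_mem_edges this) hd''e
  have hd''0 : d'' = 0 := eq_zero_of_diffGraph_isAcyclic d'' hd''r hd''c hac''
  have hyx : y = x + t • (x' - x) := by
    have : d = t • d' := by rwa [hdd'', sub_eq_zero] at hd''0
    rw [hdd, hdd'] at this
    rw [← this]
    abel
  rcases lt_or_ge t 0 with ht0 | ht0
  · exfalso
    have h1t : (1 : ℝ) - t ≠ 0 := by linarith
    have hxopen : x ∈ openSegment ℝ y x' := by
      have h1tp : (0:ℝ) < 1 - t := by linarith
      have hntp : (0:ℝ) < -t := by linarith
      refine ⟨1 / (1 - t), -t / (1 - t), by positivity, by positivity, by field_simp; ring, ?_⟩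
      rw [hyx]
      ext i j
      simp only [Matrix.add_apply, Matrix.smul_apply, Matrix.sub_apply, smul_eq_mul]
      field_simp
      ring
    have := (⟨hx.2 ⟨hynn, hyr, hyc⟩ hx'.1 hxopen,
      hx.2 hx'.1 ⟨hynn, hyr, hyc⟩ (by rw [openSegment_symm]; exact hxopen)⟩ : _ ∧ _)
    exact hne this.2.symm
  rcases le_or_gt t 1 with ht1 | ht1
  · refine ⟨1 - t, t, by linarith, ht0, by ring, ?_⟩
    rw [hyx]
    ext i j
    simp only [Matrix.add_apply, Matrix.smul_apply, Matrix.sub_apply, smul_eq_mul]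
    ring
  · exfalso
    have htp : (0:ℝ) < t := by linarith
    have ht1p : (0:ℝ) < t - 1 := by linarith
    have hx'open : x' ∈ openSegment ℝ y x := by
      refine ⟨1 / t, (t - 1) / t, by positivity, by positivity, by field_simp; ring, ?_⟩
      rw [hyx]
      ext i j
      simp only [Matrix.add_apply, Matrix.smul_apply, Matrix.sub_apply, smul_eq_mul]
      field_simp
      ring
    have := (⟨hx'.2 ⟨hynn, hyr, hyc⟩ hx.1 hx'open,
      hx'.2 hx.1 ⟨hynn, hyr, hyc⟩ (by rw [openSegment_symm]; exact hx'open)⟩ : _ ∧ _)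
    exact hne this.2

lemma segment_subset_polytope (u : Fin p → ℝ) (v : Fin q → ℝ)
    (x x' : Matrix (Fin p) (Fin q) ℝ)
    (hxP : x ∈ transportationPolytope p q u v) (hx'P : x' ∈ transportationPolytope p q u v) :
    segment ℝ x x' ⊆ transportationPolytope p q u v := by
  rintro w ⟨a, b, ha, hb, hab, rfl⟩
  obtain ⟨hxnn, hxr, hxc⟩ := hxP
  obtain ⟨hx'nn, hx'r, hx'c⟩ := hx'P
  refine ⟨?_, ?_, ?_⟩
  · intro i j
    simp only [Matrix.add_apply, Matrix.smul_apply, smul_eq_mul]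
    have := hxnn i j; have := hx'nn i j
    nlinarith
  · intro i
    simp only [Matrix.add_apply, Matrix.smul_apply, smul_eq_mul, Finset.sum_add_distrib,
      ← Finset.mul_sum, hxr i, hx'r i]
    rw [← add_mul, hab, one_mul]
  · intro j
    simp only [Matrix.add_apply, Matrix.smul_apply, smul_eq_mul, Finset.sum_add_distrib,
      ← Finset.mul_sum, hxc j, hx'c j]
    rw [← add_mul, hab, one_mul]

/-- Two distinct vertices of a generic transportation polytope are adjacent iff the
union of their support graphs contains a unique cycle. -/
theorem generic_transportationPolytope_adjacent_iff_uniqueCycle (p q : ℕ)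
    (u : Fin p → ℝ) (v : Fin q → ℝ) (hu : ∀ i, 0 < u i) (hv : ∀ j, 0 < v j)
    (hsum : ∑ i, u i = ∑ j, v j)
    (hgen : ∀ (Y : Finset (Fin p)) (Z : Finset (Fin q)),
      Y.Nonempty → Y ≠ Finset.univ → Z.Nonempty → Z ≠ Finset.univ →
      ∑ i ∈ Y, u i ≠ ∑ j ∈ Z, v j)
    (x x' : Matrix (Fin p) (Fin q) ℝ)
    (hx : x ∈ Set.extremePoints ℝ (transportationPolytope p q u v))
    (hx' : x' ∈ Set.extremePoints ℝ (transportationPolytope p q u v))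
    (hne : x ≠ x') :
    IsExtreme ℝ (transportationPolytope p q u v) (segment ℝ x x') ↔
      HasUniqueCycle (supportGraph x ⊔ supportGraph x') := by
  classical
  set G := supportGraph x ⊔ supportGraph x' with hG
  have hGcross : Crossing G := supportGraph_sup_crossing x x'
  obtain ⟨hxnn, hxr, hxc⟩ := hx.1
  obtain ⟨hx'nn, hx'r, hx'c⟩ := hx'.1
  set d' : Matrix (Fin p) (Fin q) ℝ := x' - x with hdd'
  have hd'0 : d' ≠ 0 := by rw [hdd', sub_ne_zero]; exact Ne.symm hne
  have hd'r : ∀ i, ∑ j, d' i j = 0 := by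
    intro i; simp only [hdd', Matrix.sub_apply, Finset.sum_sub_distrib, hx'r i, hxr i, sub_self]
  have hd'c : ∀ j, ∑ i, d' i j = 0 := by
    intro j; simp only [hdd', Matrix.sub_apply, Finset.sum_sub_distrib, hx'c j, hxc j, sub_self]
  have hled' : diffGraph d' ≤ G := by
    apply diffGraph_le
    intro i j hij
    rw [hdd', Matrix.sub_apply, sub_ne_zero] at hij
    rw [hG, supportGraph_sup_adj]
    rcases lt_or_eq_of_le (hxnn i j) with h | h
    · exact Or.inl h
    · rcases lt_or_eq_of_le (hx'nn i j) with h' | h'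
      · exact Or.inr h'
      · exact absurd (h'.symm.trans h) hij
  constructor
  · intro hext
    constructor
    · intro hac
      obtain ⟨a1, c1, hc1⟩ := exists_cycle_of_ne_zero d' hd'r hd'c hd'0
      exact hac (c1.mapLe hled') (hc1.mapLe hled')
    · have claim : ∀ (a : Fin p ⊕ Fin q) (c : G.Walk a a), c.IsCycle →
          c.edges.toFinset = (Finset.univ.filter
              (fun pr : Fin p × Fin q => d' pr.1 pr.2 ≠ 0)).image
            (fun pr => s(Sum.inl pr.1, Sum.inr pr.2)) := by
        intro a c hc
        set f := walkFlow c with hf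
        have hnd := hc.isTrail.edges_nodup
        have hfr : ∀ i, ∑ j, f i j = 0 := by
          intro i; rw [hf, walkFlow_rowSum hGcross]; simp
        have hfc : ∀ j, ∑ i, f i j = 0 := by
          intro j; rw [hf, walkFlow_colSum hGcross]; simp
        have hfadj : ∀ i j, f i j ≠ 0 → G.Adj (.inl i) (.inr j) := by
          intro i j hij
          exact c.adj_of_mem_edges ((walkFlow_ne_zero_iff c hnd i j).mp hij)
        have hf0 : f ≠ 0 := walkFlow_ne_zero_of_isCycle hGcross hc
        have hf1 : ∀ i j, f i j ≠ 0 → (f i j = 1 ∨ f i j = -1) := by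
          intro i j hij
          rcases walkFlow_entry c hnd i j with ⟨_, hval⟩ | ⟨_, hval⟩
          · exact hval
          · exact absurd hval hij
        set w0 : Matrix (Fin p) (Fin q) ℝ := (1/2 : ℝ) • x + (1/2 : ℝ) • x' with hw0
        have hw0e : ∀ i j, w0 i j = (1/2) * x i j + (1/2) * x' i j := by
          intro i j; simp [hw0, Matrix.add_apply, Matrix.smul_apply, smul_eq_mul]
        have hw0pos : ∀ i j, G.Adj (.inl i) (.inr j) → 0 < w0 i j := by
          intro i j hadj
          rw [hG, supportGraph_sup_adj] at hadj
          have h1 := hxnn i j; have h2 := hx'nn i j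
          rw [hw0e]
          rcases hadj with h | h <;> linarith
        set S : Finset (Fin p × Fin q) :=
          Finset.univ.filter (fun pr => f pr.1 pr.2 ≠ 0) with hS
        have hSne : S.Nonempty := by
          obtain ⟨i, hi⟩ := Function.ne_iff.mp hf0
          obtain ⟨j, hj⟩ := Function.ne_iff.mp hi
          exact ⟨(i, j), Finset.mem_filter.mpr ⟨Finset.mem_univ _, hj⟩⟩
        set ε : ℝ := S.inf' hSne (fun pr => w0 pr.1 pr.2) with hε
        have hεpos : 0 < ε := by
          rw [hε, Finset.lt_inf'_iff]
          intro pr hpr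
          exact hw0pos _ _ (hfadj _ _ (Finset.mem_filter.mp hpr).2)
        have hεle : ∀ i j, f i j ≠ 0 → ε ≤ w0 i j := by
          intro i j h
          exact Finset.inf'_le (b := (i, j)) _ (Finset.mem_filter.mpr ⟨Finset.mem_univ _, h⟩)
        have hmem : ∀ s : ℝ, s = 1 ∨ s = -1 →
            w0 + (s * ε) • f ∈ transportationPolytope p q u v := by
          intro s hs
          refine ⟨?_, ?_, ?_⟩
          · intro i j
            simp only [Matrix.add_apply, Matrix.smul_apply, smul_eq_mul]
            by_cases hfij : f i j = 0
            · rw [hfij]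
              have h1 := hxnn i j; have h2 := hx'nn i j
              rw [hw0e]; linarith
            · have h3 := hεle i j hfij
              rcases hf1 i j hfij with h | h <;> rcases hs with rfl | rfl <;> rw [h] <;> linarith
          · intro i
            simp only [Matrix.add_apply, Matrix.smul_apply, smul_eq_mul,
              Finset.sum_add_distrib, ← Finset.mul_sum, hfr i, mul_zero, add_zero]
            rw [hw0, hG] at *
            simp only [Matrix.add_apply, Matrix.smul_apply, smul_eq_mul,
              Finset.sum_add_distrib, ← Finset.mul_sum, hxr i, hx'r i]
            ring
          · intro j
            simp only [Matrix.add_apply, Matrix.smul_apply, smul_eq_mul,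
              Finset.sum_add_distrib, ← Finset.mul_sum, hfc j, mul_zero, add_zero]
            rw [hw0, hG] at *
            simp only [Matrix.add_apply, Matrix.smul_apply, smul_eq_mul,
              Finset.sum_add_distrib, ← Finset.mul_sum, hxc j, hx'c j]
            ring
        have hmemp := hmem 1 (Or.inl rfl)
        have hmemm := hmem (-1) (Or.inr rfl)
        have hw0seg : w0 ∈ segment ℝ x x' :=
          ⟨1/2, 1/2, by norm_num, by norm_num, by norm_num, rfl⟩
        have hw0open : w0 ∈ openSegment ℝ (w0 + (1 * ε) • f) (w0 + (-1 * ε) • f) := by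
          refine ⟨1/2, 1/2, by norm_num, by norm_num, by norm_num, ?_⟩
          ext i j
          simp only [Matrix.add_apply, Matrix.smul_apply, smul_eq_mul]
          ring
        obtain ⟨hp', hm'⟩ := (⟨hext.2 hmemp hmemm hw0seg hw0open,
            hext.2 hmemm hmemp hw0seg (by rw [openSegment_symm]; exact hw0open)⟩ : _ ∧ _)
        obtain ⟨s1, s2, hs1, hs2, hsum12, heqp⟩ := hp'
        obtain ⟨s1', s2', hs1', hs2', hsum12', heqm⟩ := hm'
        have hkey : ∀ i j, 2 * ε * f i j = (s2 - s2') * d' i j := by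
          intro i j
          have e1 := congrFun (congrFun heqp i) j
          have e2 := congrFun (congrFun heqm i) j
          simp only [Matrix.add_apply, Matrix.smul_apply, Matrix.sub_apply,
            smul_eq_mul] at e1 e2 ⊢
          rw [hdd', Matrix.sub_apply]
          linear_combination e2 - e1 + (hsum12 - hsum12') * x i j
        have hsupp_eq : ∀ i j, (f i j ≠ 0 ↔ d' i j ≠ 0) := by
          have hlam : s2 - s2' ≠ 0 := by
            intro h0
            apply hf0
            ext i j
            have := hkey i j
            rw [h0, zero_mul] at this
            have h2ε : (2:ℝ) * ε ≠ 0 := by positivity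
            simpa [Matrix.zero_apply] using (mul_eq_zero.mp this).resolve_left h2ε
          intro i j
          have hk := hkey i j
          constructor
          · intro hfij h0
            rw [h0, mul_zero] at hk
            have h2ε : (2:ℝ) * ε ≠ 0 := by positivity
            exact hfij ((mul_eq_zero.mp hk).resolve_left h2ε)
          · intro hdij h0
            rw [h0, mul_zero] at hk
            exact hdij ((mul_eq_zero.mp hk.symm).resolve_left hlam)
        rw [edges_toFinset_eq hGcross c hnd]
        congr 1
        ext pr
        simp only [Finset.mem_filter, Finset.mem_univ, true_and]
        exact hsupp_eq pr.1 pr.2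
      intro a b c d hc hd
      rw [claim a c hc, claim b d hd]
  · intro huc
    refine ⟨segment_subset_polytope u v x x' hx.1 hx'.1, ?_⟩
    intro y hy z hz w hwseg hwopen
    obtain ⟨s1, s2, hs1, hs2, hsum12, hw⟩ := hwopen
    obtain ⟨a1, b1, ha1, hb1, hab1, hw'⟩ := hwseg
    have hwadj : ∀ (m : Matrix (Fin p) (Fin q) ℝ), m ∈ transportationPolytope p q u v →
        (∀ i j, (s1 • y + s2 • z) i j ≠ 0 → G.Adj (.inl i) (.inr j)) := by
      intro m _ i j hij
      rw [hG, supportGraph_sup_adj]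
      have := congrFun (congrFun hw' i) j
      simp only [Matrix.add_apply, Matrix.smul_apply, smul_eq_mul] at this hij
      by_contra hcon
      push_neg at hcon
      have h1 := hxnn i j; have h2 := hx'nn i j
      have hx0 : x i j = 0 := le_antisymm hcon.1 h1
      have hx'0 : x' i j = 0 := le_antisymm hcon.2 h2
      rw [hx0, hx'0, mul_zero, mul_zero, add_zero] at this
      have hwij := congrFun (congrFun hw i) j
      simp only [Matrix.add_apply, Matrix.smul_apply, smul_eq_mul] at hwij
      exact hij (hwij.trans this.symm)
    have key : ∀ m ∈ transportationPolytope p q u v,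
        (∀ i j, m i j ≠ 0 → G.Adj (.inl i) (.inr j)) → m ∈ segment ℝ x x' := by
      intro m hm hmadj
      exact mem_segment_of_supp_subset u v x x' m hx hx' hne (hG ▸ huc) hm (hG ▸ hmadj)
    have hsupp : ∀ (m : Matrix (Fin p) (Fin q) ℝ) (s s' : ℝ), 0 < s → 0 ≤ s' →
        (∀ i j, 0 ≤ m i j) → ∀ (m' : Matrix (Fin p) (Fin q) ℝ), (∀ i j, 0 ≤ m' i j) →
        ∀ i j, m i j ≠ 0 → (s • m + s' • m') i j ≠ 0 := by
      intro m s s' hs hs' hmn m' hm'n i j hij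
      simp only [Matrix.add_apply, Matrix.smul_apply, smul_eq_mul]
      have h1 := hmn i j
      have h2 := hm'n i j
      have : 0 < m i j := lt_of_le_of_ne h1 (Ne.symm hij)
      nlinarith
    have hynn := hy.1
    have hznn := hz.1
    refine And.left (b := z ∈ segment ℝ x x') ⟨?_, ?_⟩
    · refine key y hy ?_
      intro i j hij
      exact hwadj y hy i j (hsupp y s1 s2 hs1 (le_of_lt hs2) hynn z hznn i j hij)
    · refine key z hz ?_
      intro i j hij
      have : (s2 • z + s1 • y) i j ≠ 0 :=
        hsupp z s2 s1 hs2 (le_of_lt hs1) hznn y hynn i j hij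
      refine hwadj z hz i j ?_
      intro h0
      apply this
      simp only [Matrix.add_apply, Matrix.smul_apply, smul_eq_mul] at h0 ⊢
      linarith [h0]
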